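/- Let f : G → U(H_A) be a map from a finite group into unitaries on a finite-dimensional Hilbert space H_A, and |ψ⟩ ∈ H_A ⊗ H_B a state such that f(y)*f(x)f(x⁻¹y) ⊗ I |ψ⟩ = |ψ⟩ for all x, y ∈ G. Then f(x)f(y) ⊗ I |ψ⟩ = f(xy) ⊗ I |ψ⟩ for all x, y ∈ G; in particular each f(x) preserves the subspace H₀ = span{(f(g)⊗I)|ψ⟩ : g ∈ G} of H_A ⊗ H_B, and x ↦ f(x)|_{H₀} is a group homomorphism into the unitaries of H₀. -/
import Mathlib


open TensorProduct

theorem stmt_19 {G : Type*} [Group G] [Finite G]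
    {HA HB : Type*} [NormedAddCommGroup HA] [InnerProductSpace ℂ HA]
    [FiniteDimensional ℂ HA] [CompleteSpace HA]
    [NormedAddCommGroup HB] [InnerProductSpace ℂ HB] [FiniteDimensional ℂ HB]
    (f : G → (HA →L[ℂ] HA)) (hf : ∀ x, f x ∈ unitary (HA →L[ℂ] HA))
    (ψ : TensorProduct ℂ HA HB)
    (hrep : ∀ x y : G,
      (LinearMap.rTensor HB ((star (f y) * f x * f (x⁻¹ * y) : HA →L[ℂ] HA) : HA →ₗ[ℂ] HA)) ψ = ψ) :
    (∀ x y : G,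
      (LinearMap.rTensor HB ((f x * f y : HA →L[ℂ] HA) : HA →ₗ[ℂ] HA)) ψ =
        (LinearMap.rTensor HB ((f (x * y) : HA →L[ℂ] HA) : HA →ₗ[ℂ] HA)) ψ) ∧
    (∀ x : G, ∀ v ∈ Submodule.span ℂ
        {v : TensorProduct ℂ HA HB | ∃ g : G,
          v = (LinearMap.rTensor HB ((f g : HA →L[ℂ] HA) : HA →ₗ[ℂ] HA)) ψ},
      (LinearMap.rTensor HB ((f x : HA →L[ℂ] HA) : HA →ₗ[ℂ] HA)) v ∈ Submodule.span ℂ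
        {v : TensorProduct ℂ HA HB | ∃ g : G,
          v = (LinearMap.rTensor HB ((f g : HA →L[ℂ] HA) : HA →ₗ[ℂ] HA)) ψ}) ∧
    (∀ v ∈ Submodule.span ℂ
        {v : TensorProduct ℂ HA HB | ∃ g : G,
          v = (LinearMap.rTensor HB ((f g : HA →L[ℂ] HA) : HA →ₗ[ℂ] HA)) ψ},
      (LinearMap.rTensor HB ((f 1 : HA →L[ℂ] HA) : HA →ₗ[ℂ] HA)) v = v) ∧
    (∀ x y : G, ∀ v ∈ Submodule.span ℂ
        {v : TensorProduct ℂ HA HB | ∃ g : G,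
          v = (LinearMap.rTensor HB ((f g : HA →L[ℂ] HA) : HA →ₗ[ℂ] HA)) ψ},
      (LinearMap.rTensor HB ((f x : HA →L[ℂ] HA) : HA →ₗ[ℂ] HA))
          ((LinearMap.rTensor HB ((f y : HA →L[ℂ] HA) : HA →ₗ[ℂ] HA)) v) =
        (LinearMap.rTensor HB ((f (x * y) : HA →L[ℂ] HA) : HA →ₗ[ℂ] HA)) v) := by

  classical
  have rT_mul : ∀ (a b : HA →L[ℂ] HA) (v : TensorProduct ℂ HA HB),
      (LinearMap.rTensor HB ((a * b : HA →L[ℂ] HA) : HA →ₗ[ℂ] HA)) v =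
        (LinearMap.rTensor HB (a : HA →ₗ[ℂ] HA))
          ((LinearMap.rTensor HB (b : HA →ₗ[ℂ] HA)) v) := by
    intro a b v
    have h : ((a * b : HA →L[ℂ] HA) : HA →ₗ[ℂ] HA) =
        (a : HA →ₗ[ℂ] HA) ∘ₗ (b : HA →ₗ[ℂ] HA) := rfl
    rw [h, LinearMap.rTensor_comp, LinearMap.comp_apply]
  have key : ∀ x y : G,
      (LinearMap.rTensor HB ((f x * f y : HA →L[ℂ] HA) : HA →ₗ[ℂ] HA)) ψ =
        (LinearMap.rTensor HB ((f (x * y) : HA →L[ℂ] HA) : HA →ₗ[ℂ] HA)) ψ := by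
    intro x y
    have hu : f (x * y) * star (f (x * y)) = 1 := (Unitary.mem_iff.mp (hf (x * y))).2
    have h := hrep x (x * y)
    rw [inv_mul_cancel_left] at h
    calc (LinearMap.rTensor HB ((f x * f y : HA →L[ℂ] HA) : HA →ₗ[ℂ] HA)) ψ
        = (LinearMap.rTensor HB
            ((f (x * y) * (star (f (x * y)) * f x * f y) : HA →L[ℂ] HA) : HA →ₗ[ℂ] HA)) ψ := by
          rw [← mul_assoc, ← mul_assoc, hu, one_mul]
      _ = (LinearMap.rTensor HB ((f (x * y) : HA →L[ℂ] HA) : HA →ₗ[ℂ] HA))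
            ((LinearMap.rTensor HB
              ((star (f (x * y)) * f x * f y : HA →L[ℂ] HA) : HA →ₗ[ℂ] HA)) ψ) :=
          rT_mul _ _ _
      _ = (LinearMap.rTensor HB ((f (x * y) : HA →L[ℂ] HA) : HA →ₗ[ℂ] HA)) ψ := by rw [h]
  set S : Set (TensorProduct ℂ HA HB) :=
    {v : TensorProduct ℂ HA HB | ∃ g : G,
      v = (LinearMap.rTensor HB ((f g : HA →L[ℂ] HA) : HA →ₗ[ℂ] HA)) ψ} with hS
  have keyv : ∀ (x y : G), ∀ v ∈ Submodule.span ℂ S,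
      (LinearMap.rTensor HB ((f x : HA →L[ℂ] HA) : HA →ₗ[ℂ] HA))
          ((LinearMap.rTensor HB ((f y : HA →L[ℂ] HA) : HA →ₗ[ℂ] HA)) v) =
        (LinearMap.rTensor HB ((f (x * y) : HA →L[ℂ] HA) : HA →ₗ[ℂ] HA)) v := by
    intro x y v hv
    induction hv using Submodule.span_induction with
    | mem w hw =>
      obtain ⟨g, rfl⟩ := hw
      rw [← rT_mul, ← rT_mul, ← rT_mul, mul_assoc, rT_mul, key y g, ← rT_mul,
        key x (y * g), key (x * y) g, mul_assoc]
    | zero => simp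
    | add a b _ _ ha hb => simp [ha, hb]
    | smul c a _ ha => simp [ha]
  refine ⟨key, ?_, ?_, keyv⟩
  · intro x v hv
    induction hv using Submodule.span_induction with
    | mem w hw =>
      obtain ⟨g, rfl⟩ := hw
      exact Submodule.subset_span ⟨x * g, by rw [← rT_mul, key]⟩
    | zero => simp
    | add a b _ _ ha hb =>
      rw [map_add]; exact Submodule.add_mem _ ha hb
    | smul c a _ ha =>
      rw [map_smul]; exact Submodule.smul_mem _ c ha
  · intro v hv
    induction hv using Submodule.span_induction with
    | mem w hw =>
      obtain ⟨g, rfl⟩ := hw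
      rw [← rT_mul, key, one_mul]
    | zero => simp
    | add a b _ _ ha hb => simp [ha, hb]
    | smul c a _ ha => simp [ha]
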